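/- (Abel-type identity, case (p,q) = (−2,0)) For every integer n ≥ 2 and all real numbers x₁, x₂ with x₁ ≠ 0 and x₁ ≠ −1: ∑_{k=0}^{n} C(n,k) · x₁·(x₁+1) · (x₁+k)^{(k−2 : ℤ)} · (x₂+n−k)^{n−k} = x₁^{−1} · ( (x₁+1)·(x₁+x₂+n)^{n} − n·x₁·(x₁+x₂+n)^{n−1} ), where C(n,k) denotes the binomial coefficient and (x₁+k)^{(k−2 : ℤ)} denotes the integer power (zpow) of the real number x₁+k with exponent k−2 ∈ ℤ (which is negative only for k = 0 and k = 1, where the base x₁, respectively x₁+1, is nonzero by hypothesis). -/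

import Mathlib

open Polynomial Finset

lemma fd_poly (s : ℕ) (p : ℝ[X]) (h : p.natDegree < s) :
    ∑ k ∈ range (s+1), (-1:ℝ)^k * (s.choose k) * p.eval (k:ℝ) = 0 := by
  induction s generalizing p with
  | zero => omega
  | succ s ih =>
    set A : ℝ := ∑ k ∈ range (s+1), (-1:ℝ)^k * (s.choose k) * p.eval (k:ℝ) with hA
    set A' : ℝ := ∑ k ∈ range (s+1), (-1:ℝ)^k * (s.choose k) * p.eval ((k:ℝ)+1) with hA'
    have hB : ∑ k ∈ range (s+1+1), (-1:ℝ)^k * (s.choose k) * p.eval (k:ℝ) = A := by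
      rw [Finset.sum_range_succ, Nat.choose_succ_self]; simp [hA]
    have hB' : ∑ k ∈ range (s+1+1), (-1:ℝ)^k * (s.choose k) * p.eval (k:ℝ)
        = (∑ k ∈ range (s+1), (-1:ℝ)^(k+1) * (s.choose (k+1)) * p.eval ((k:ℝ)+1))
          + p.eval 0 := by
      rw [Finset.sum_range_succ']
      push_cast
      ring_nf
      simp
    have hshift : ∑ k ∈ range (s+1), (-1:ℝ)^(k+1) * (s.choose (k+1)) * p.eval ((k:ℝ)+1)
        = A - p.eval 0 := by rw [← hB, hB']; ring
    have key : ∑ k ∈ range (s+1+1), (-1:ℝ)^k * ((s+1).choose k) * p.eval (k:ℝ)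
        = A - A' := by
      rw [Finset.sum_range_succ']
      have step : ∀ k ∈ range (s+1),
          (-1:ℝ)^(k+1) * (((s+1).choose (k+1) : ℕ) : ℝ) * p.eval (((k+1 : ℕ)):ℝ)
          = -((-1:ℝ)^k * (s.choose k) * p.eval ((k:ℝ)+1))
            + (-1:ℝ)^(k+1) * (s.choose (k+1)) * p.eval ((k:ℝ)+1) := by
        intro k _
        rw [Nat.choose_succ_succ]
        push_cast
        ring
      rw [Finset.sum_congr rfl step, Finset.sum_add_distrib, Finset.sum_neg_distrib, hshift]
      simp only [Nat.cast_zero, Nat.choose_zero_right, Nat.cast_one, pow_zero, one_mul]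
      rw [hA']
      ring
    set q : ℝ[X] := p.comp (X + C 1) - p with hq
    have hAA' : A - A' = - ∑ k ∈ range (s+1), (-1:ℝ)^k * (s.choose k) * q.eval (k:ℝ) := by
      have hterm : ∀ k ∈ range (s+1),
          (-1:ℝ)^k * (s.choose k) * p.eval (k:ℝ) - (-1:ℝ)^k * (s.choose k) * p.eval ((k:ℝ)+1)
          = -((-1:ℝ)^k * (s.choose k) * q.eval (k:ℝ)) := by
        intro k _
        simp only [hq, eval_sub, eval_comp, eval_add, eval_X, eval_C]
        ring
      rw [hA, hA', ← Finset.sum_sub_distrib, Finset.sum_congr rfl hterm,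
        Finset.sum_neg_distrib]
    rw [key, hAA']
    by_cases hp : p.natDegree = 0
    · have : q = 0 := by
        obtain ⟨c, rfl⟩ : ∃ c, p = C c := ⟨p.coeff 0, p.eq_C_of_natDegree_eq_zero hp⟩
        simp [hq]
      simp [this]
    · have hp0 : p ≠ 0 := fun h0 => hp (by simp [h0])
      have hcomp0 : (p.comp (X + C 1) : ℝ[X]).natDegree = p.natDegree := by
        rw [natDegree_comp, natDegree_X_add_C, mul_one]
      have hlc : (p.comp (X + C 1) : ℝ[X]).leadingCoeff = p.leadingCoeff := by
        rw [leadingCoeff_comp (by rw [natDegree_X_add_C]; norm_num), leadingCoeff_X_add_C,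
          one_pow, mul_one]
      have hcne : (p.comp (X + C 1) : ℝ[X]) ≠ 0 := by
        intro hc0
        rw [hc0] at hlc
        exact hp0 (leadingCoeff_eq_zero.mp (by simpa using hlc.symm))
      have hdcomp : (p.comp (X + C 1) : ℝ[X]).degree = p.degree := by
        rw [degree_eq_natDegree hp0, degree_eq_natDegree hcne, hcomp0]
      have hdq : q.degree < p.degree := by
        have h2 := degree_sub_lt hdcomp hcne hlc
        rw [hq]
        exact h2.trans_eq hdcomp
      have hqdeg : q.natDegree < s := by
        by_cases hq0 : q = 0
        · simp [hq0]; omega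
        · have h1 := Polynomial.natDegree_lt_natDegree hq0 hdq
          omega
      rw [ih q hqdeg]
      ring

lemma fd' (s d : ℕ) (hds : d < s) (x : ℝ) :
    ∑ k ∈ range (s+1), (-1:ℝ)^k * (s.choose k) * (x + k)^d = 0 := by
  have hdeg : ((X + C x : ℝ[X])^d).natDegree < s := by
    rw [natDegree_pow, natDegree_X_add_C, mul_one]; exact hds
  have := fd_poly s ((X + C x)^d) hdeg
  simpa [add_comm] using this

lemma triangle (n : ℕ) (f : ℕ → ℕ → ℝ) :
    ∑ k ∈ range n, ∑ j ∈ range (n - k), f k j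
    = ∑ s ∈ range n, ∑ k ∈ range (s+1), f k (s - k) := by
  rw [Finset.sum_sigma', Finset.sum_sigma']
  refine Finset.sum_nbij' (i := fun p => (⟨p.1 + p.2, p.1⟩ : (_ : ℕ) × ℕ))
    (j := fun p => (⟨p.2, p.1 - p.2⟩ : (_ : ℕ) × ℕ)) ?_ ?_ ?_ ?_ ?_
  · intro a ha
    simp only [Finset.mem_sigma, Finset.mem_range] at *
    omega
  · intro a ha
    simp only [Finset.mem_sigma, Finset.mem_range] at *
    omega
  · rintro ⟨a1, a2⟩ ha
    simp only [Finset.mem_sigma, Finset.mem_range] at ha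
    simp only [Sigma.mk.inj_iff, heq_eq_eq]
    exact ⟨trivial, by omega⟩
  · rintro ⟨a1, a2⟩ ha
    simp only [Finset.mem_sigma, Finset.mem_range] at ha
    simp only [Sigma.mk.inj_iff, heq_eq_eq]
    exact ⟨by omega, trivial⟩
  · intro a ha
    simp only [Nat.add_sub_cancel_left]

lemma abel1 (n : ℕ) (x y : ℝ) :
    ∑ k ∈ range n, (n.choose (k+1) : ℝ) * x * (x+((k:ℝ)+1))^k * (y+n-((k:ℝ)+1))^(n-(k+1))
      = (x+y+n)^n - (y+n)^n := by
  set X : ℝ := x + y + n with hX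
  have expand : ∀ k ∈ range n,
      (n.choose (k+1) : ℝ) * x * (x+((k:ℝ)+1))^k * (y+n-((k:ℝ)+1))^(n-(k+1))
      = ∑ j ∈ range (n - k), (n.choose (k+1) : ℝ) * ((n-(k+1)).choose j : ℝ) * x *
          (-1)^j * (x+((k:ℝ)+1))^(k+j) * X^(n-(k+1)-j) := by
    intro k hk
    rw [Finset.mem_range] at hk
    have hm : n - (k+1) + 1 = n - k := by omega
    have hyx : y + n - ((k:ℝ)+1) = (-(x+((k:ℝ)+1))) + X := by rw [hX]; ring
    rw [hyx, add_pow (-(x+((k:ℝ)+1))) X (n-(k+1)), ← hm, Finset.mul_sum]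
    apply Finset.sum_congr rfl
    intro j hj
    rw [neg_pow, pow_add]
    ring
  rw [Finset.sum_congr rfl expand]
  rw [triangle n (fun k j => (n.choose (k+1) : ℝ) * ((n-(k+1)).choose j : ℝ) * x *
          (-1)^j * (x+((k:ℝ)+1))^(k+j) * X^(n-(k+1)-j))]
  have inner : ∀ s ∈ range n,
      ∑ k ∈ range (s+1), (n.choose (k+1) : ℝ) * ((n-(k+1)).choose (s-k) : ℝ) * x *
          (-1)^(s-k) * (x+((k:ℝ)+1))^(k+(s-k)) * X^(n-(k+1)-(s-k))
      = -((n.choose (s+1) : ℝ) * (-x)^(s+1) * X^(n-(s+1))) := by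
    intro s hs
    rw [Finset.mem_range] at hs
    have claim2 : ∑ k ∈ range (s+1),
        (-1:ℝ)^(s-k) * (((s+1).choose (k+1) : ℕ) : ℝ) * (x+((k:ℝ)+1))^s
        = (-1)^s * x^s := by
      have h0 := fd' (s+1) s (by omega) x
      rw [Finset.sum_range_succ'] at h0
      have h1 : ∑ k ∈ range (s+1), (-1:ℝ)^(k+1) * (((s+1).choose (k+1):ℕ):ℝ) *
          (x+((k:ℝ)+1))^s = - x^s := by
        have : ∀ k ∈ range (s+1), (-1:ℝ)^(k+1) * (((s+1).choose (k+1):ℕ):ℝ) *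
            (x + ((k:ℕ)+1 : ℕ))^s = (-1:ℝ)^(k+1) * (((s+1).choose (k+1):ℕ):ℝ) *
            (x+((k:ℝ)+1))^s := by
          intro k _
          push_cast
          ring
        rw [Finset.sum_congr rfl this] at h0
        simp at h0
        linarith
      have hsig : ∀ k ∈ range (s+1), (-1:ℝ)^(s-k) * (((s+1).choose (k+1) : ℕ) : ℝ) *
          (x+((k:ℝ)+1))^s = (-1)^(s+1) * ((-1:ℝ)^(k+1) * (((s+1).choose (k+1):ℕ):ℝ) *
          (x+((k:ℝ)+1))^s) := by
        intro k hk
        rw [Finset.mem_range] at hk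
        have hpow : (-1:ℝ)^(s-k) = (-1)^(s+1) * (-1)^(k+1) := by
          rw [← pow_add, show s+1+(k+1) = (s-k) + 2*(k+1) by omega, pow_add, pow_mul]
          norm_num
        rw [hpow]; ring
      rw [Finset.sum_congr rfl hsig, ← Finset.mul_sum, h1, pow_succ]
      ring
    have step : ∀ k ∈ range (s+1),
        (n.choose (k+1) : ℝ) * ((n-(k+1)).choose (s-k) : ℝ) * x *
          (-1)^(s-k) * (x+((k:ℝ)+1))^(k+(s-k)) * X^(n-(k+1)-(s-k))
        = ((n.choose (s+1) : ℝ) * x * X^(n-(s+1))) *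
          ((-1:ℝ)^(s-k) * (((s+1).choose (k+1) : ℕ) : ℝ) * (x+((k:ℝ)+1))^s) := by
      intro k hk
      rw [Finset.mem_range] at hk
      have hch := Nat.choose_mul (n := n) (show k+1 ≤ s+1 by omega)
      have hch' : ((n.choose (k+1) : ℕ) : ℝ) * (((n-(k+1)).choose (s-k) : ℕ) : ℝ)
          = ((n.choose (s+1) : ℕ) : ℝ) * (((s+1).choose (k+1) : ℕ) : ℝ) := by
        rw [show s - k = (s+1) - (k+1) by omega]
        exact_mod_cast hch.symm
      rw [show k+(s-k) = s by omega, show n-(k+1)-(s-k) = n-(s+1) by omega]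
      calc (n.choose (k+1) : ℝ) * ((n-(k+1)).choose (s-k) : ℝ) * x *
          (-1)^(s-k) * (x+((k:ℝ)+1))^s * X^(n-(s+1))
          = ((n.choose (k+1) : ℝ) * ((n-(k+1)).choose (s-k) : ℝ)) *
            (x * (-1)^(s-k) * (x+((k:ℝ)+1))^s * X^(n-(s+1))) := by ring
        _ = ((n.choose (s+1) : ℝ) * (((s+1).choose (k+1) : ℕ) : ℝ)) *
            (x * (-1)^(s-k) * (x+((k:ℝ)+1))^s * X^(n-(s+1))) := by rw [hch']
        _ = _ := by ring
    rw [Finset.sum_congr rfl step, ← Finset.mul_sum, claim2, pow_succ]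
    ring
  rw [Finset.sum_congr rfl inner]
  have bin : (y+(n:ℝ))^n = ∑ s ∈ range (n+1), (-x)^s * X^(n-s) * (n.choose s : ℝ) := by
    have : y + (n:ℝ) = (-x) + X := by rw [hX]; ring
    rw [this, add_pow]
  rw [Finset.sum_range_succ'] at bin
  simp only [pow_zero, Nat.sub_zero, Nat.choose_zero_right, Nat.cast_one, one_mul, mul_one] at bin
  rw [Finset.sum_neg_distrib]
  have : ∑ s ∈ range n, (n.choose (s+1) : ℝ) * (-x)^(s+1) * X^(n-(s+1))
      = ∑ s ∈ range n, (-x)^(s+1) * X^(n-(s+1)) * (n.choose (s+1) : ℝ) := by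
    apply Finset.sum_congr rfl; intro s _; ring
  rw [this]
  linarith [bin]

theorem abel_identity_m2_0 (n : ℕ) (hn : 2 ≤ n) (x₁ x₂ : ℝ)
    (h0 : x₁ ≠ 0) (h1 : x₁ ≠ -1) :
    ∑ k ∈ Finset.range (n + 1),
        (n.choose k : ℝ) * (x₁ * (x₁ + 1)) * (x₁ + k) ^ ((k : ℤ) - 2) * (x₂ + n - k) ^ (n - k)
      = x₁⁻¹ * ((x₁ + 1) * (x₁ + x₂ + n) ^ n - n * x₁ * (x₁ + x₂ + n) ^ (n - 1)) := by
  have hx1 : x₁ + 1 ≠ 0 := by intro h; apply h1; linarith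
  obtain ⟨m, rfl⟩ : ∃ m, n = m + 2 := ⟨n - 2, by omega⟩
  -- canonical form of abel1 for (m+2, x₁, x₂), with k = 0 peeled off
  have hP := abel1 (m+2) x₁ x₂
  rw [Finset.sum_range_succ'] at hP
  have hPc : ∀ k ∈ range (m+1),
      ((m+2).choose ((k+1)+1) : ℝ) * x₁ * (x₁+((((k+1):ℕ):ℝ)+1))^(k+1) *
        (x₂+((m+2:ℕ):ℝ)-((((k+1):ℕ):ℝ)+1))^((m+2)-((k+1)+1))
      = ((m+2).choose (k+2) : ℝ) * (x₁ * (x₁+((k:ℝ)+2))^(k+1)) *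
        (x₂+((m:ℝ)+2)-((k:ℝ)+2))^(m-k) := by
    intro k hk
    rw [Finset.mem_range] at hk
    rw [show (m+2)-((k+1)+1) = m-k by omega]
    push_cast
    ring
  rw [Finset.sum_congr rfl hPc] at hP
  have hP' : ∑ k ∈ range (m+1), ((m+2).choose (k+2) : ℝ) * (x₁ * (x₁+((k:ℝ)+2))^(k+1)) *
        (x₂+((m:ℝ)+2)-((k:ℝ)+2))^(m-k)
      = (x₁+x₂+((m:ℝ)+2))^(m+2) - (x₂+((m:ℝ)+2))^(m+2)
        - ((m:ℝ)+2) * x₁ * (x₂+((m:ℝ)+1))^(m+1) := by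
    simp only [zero_add, Nat.choose_one_right, pow_zero, mul_one, Nat.cast_zero, Nat.add_sub_cancel] at hP
    push_cast at hP
    linear_combination hP
  -- canonical form of abel1 for (m+1, x₁+1, x₂)
  have hQ := abel1 (m+1) (x₁+1) x₂
  have hQc : ∀ k ∈ range (m+1),
      ((m+1).choose (k+1) : ℝ) * (x₁+1) * ((x₁+1)+((k:ℝ)+1))^k *
        (x₂+((m+1:ℕ):ℝ)-((k:ℝ)+1))^((m+1)-(k+1))
      = ((m+1).choose (k+1) : ℝ) * ((x₁+1) * (x₁+((k:ℝ)+2))^k) *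
        (x₂+((m:ℝ)+2)-((k:ℝ)+2))^(m-k) := by
    intro k hk
    rw [Finset.mem_range] at hk
    rw [show (m+1)-(k+1) = m-k by omega]
    push_cast
    ring
  rw [Finset.sum_congr rfl hQc] at hQ
  have hQ' : ∑ k ∈ range (m+1), ((m+1).choose (k+1) : ℝ) * ((x₁+1) * (x₁+((k:ℝ)+2))^k) *
        (x₂+((m:ℝ)+2)-((k:ℝ)+2))^(m-k)
      = (x₁+x₂+((m:ℝ)+2))^(m+1) - (x₂+((m:ℝ)+1))^(m+1) := by
    push_cast at hQ
    linear_combination hQ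
  -- peel off k = 0 and k = 1 from the goal sum
  rw [Finset.sum_range_succ', Finset.sum_range_succ']
  have hFc : ∀ k ∈ range (m+1),
      ((m+2).choose ((k+1)+1) : ℝ) * (x₁ * (x₁ + 1)) *
        (x₁ + ((((k+1)+1):ℕ):ℝ)) ^ (((((k+1)+1):ℕ):ℤ) - 2) *
        (x₂ + ((m+2:ℕ):ℝ) - ((((k+1)+1):ℕ):ℝ)) ^ ((m+2) - ((k+1)+1))
      = ((m+2).choose (k+2) : ℝ) * (x₁ * (x₁ + 1)) * (x₁+((k:ℝ)+2))^k *
        (x₂+((m:ℝ)+2)-((k:ℝ)+2))^(m-k) := by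
    intro k hk
    rw [Finset.mem_range] at hk
    rw [show (((((k+1)+1):ℕ)):ℤ) - 2 = ((k:ℕ):ℤ) by push_cast; ring, zpow_natCast,
      show (m+2)-((k+1)+1) = m-k by omega]
    push_cast
    ring
  rw [Finset.sum_congr rfl hFc]
  -- the remaining equation
  apply mul_left_cancel₀ h0
  have hstep : ∀ k ∈ range (m+1),
      x₁ * (((m+2).choose (k+2) : ℝ) * (x₁ * (x₁ + 1)) * (x₁+((k:ℝ)+2))^k *
        (x₂+((m:ℝ)+2)-((k:ℝ)+2))^(m-k))
      = (x₁+1) * (((m+2).choose (k+2) : ℝ) * (x₁ * (x₁+((k:ℝ)+2))^(k+1)) *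
          (x₂+((m:ℝ)+2)-((k:ℝ)+2))^(m-k))
        - ((m:ℝ)+2) * x₁ * (((m+1).choose (k+1) : ℝ) * ((x₁+1) * (x₁+((k:ℝ)+2))^k) *
          (x₂+((m:ℝ)+2)-((k:ℝ)+2))^(m-k)) := by
    intro k hk
    have hcc : ((m:ℝ)+2) * ((m+1).choose (k+1) : ℝ)
        = ((k:ℝ)+2) * ((m+2).choose (k+2) : ℝ) := by
      have h2 : (m+2) * ((m+1).choose (k+1)) = (k+2) * ((m+2).choose (k+2)) := by
        have h := Nat.add_one_mul_choose_eq (m+1) (k+1)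
        rw [show m+1+1 = m+2 by omega, show k+1+1 = k+2 by omega] at h
        exact h.trans (Nat.mul_comm _ _)
      exact_mod_cast h2
    rw [pow_succ]
    linear_combination (x₁ * (x₁+1) * (x₁+((k:ℝ)+2))^k * (x₂+((m:ℝ)+2)-((k:ℝ)+2))^(m-k)) * hcc
  calc x₁ * ((∑ k ∈ range (m+1), ((m+2).choose (k+2) : ℝ) * (x₁ * (x₁ + 1)) * (x₁+((k:ℝ)+2))^k *
        (x₂+((m:ℝ)+2)-((k:ℝ)+2))^(m-k)
      + ((m+2).choose (0+1) : ℝ) * (x₁ * (x₁ + 1)) * (x₁ + (((0+1):ℕ):ℝ)) ^ ((((0+1):ℕ):ℤ) - 2) *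
        (x₂ + ((m+2:ℕ):ℝ) - (((0+1):ℕ):ℝ)) ^ ((m+2) - (0+1)))
      + ((m+2).choose 0 : ℝ) * (x₁ * (x₁ + 1)) * (x₁ + ((0:ℕ):ℝ)) ^ (((0:ℕ):ℤ) - 2) *
        (x₂ + ((m+2:ℕ):ℝ) - ((0:ℕ):ℝ)) ^ ((m+2) - 0))
      = (∑ k ∈ range (m+1),
          x₁ * (((m+2).choose (k+2) : ℝ) * (x₁ * (x₁ + 1)) * (x₁+((k:ℝ)+2))^k *
          (x₂+((m:ℝ)+2)-((k:ℝ)+2))^(m-k)))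
        + x₁ * (((m:ℝ)+2) * (x₁ * (x₁ + 1)) * (x₁+1)⁻¹ * (x₂+((m:ℝ)+1))^(m+1))
        + x₁ * ((x₁ * (x₁ + 1)) * (x₁^2)⁻¹ * (x₂+((m:ℝ)+2))^(m+2)) := by
        rw [mul_add, mul_add, Finset.mul_sum]
        rw [show ((((0+1):ℕ)):ℤ) - 2 = -1 by norm_num, zpow_neg_one,
          show (((0:ℕ)):ℤ) - 2 = -2 by norm_num,
          show (-2 : ℤ) = -((2:ℕ):ℤ) by norm_num, zpow_neg, zpow_natCast,
          show (m+2)-(0+1) = m+1 by omega]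
        push_cast [Nat.choose_one_right, Nat.choose_zero_right]
        ring
    _ = ((x₁+1) * ((x₁+x₂+((m:ℝ)+2))^(m+2) - (x₂+((m:ℝ)+2))^(m+2)
            - ((m:ℝ)+2) * x₁ * (x₂+((m:ℝ)+1))^(m+1))
          - ((m:ℝ)+2) * x₁ * ((x₁+x₂+((m:ℝ)+2))^(m+1) - (x₂+((m:ℝ)+1))^(m+1)))
        + x₁ * (((m:ℝ)+2) * (x₁ * (x₁ + 1)) * (x₁+1)⁻¹ * (x₂+((m:ℝ)+1))^(m+1))
        + x₁ * ((x₁ * (x₁ + 1)) * (x₁^2)⁻¹ * (x₂+((m:ℝ)+2))^(m+2)) := by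
        rw [Finset.sum_congr rfl hstep, Finset.sum_sub_distrib, ← Finset.mul_sum,
          ← Finset.mul_sum, hP', hQ']
    _ = x₁ * (x₁⁻¹ * ((x₁ + 1) * (x₁ + x₂ + (((m+2):ℕ):ℝ)) ^ (m+2)
          - (((m+2):ℕ):ℝ) * x₁ * (x₁ + x₂ + (((m+2):ℕ):ℝ)) ^ ((m+2) - 1))) := by
        rw [show (m+2)-1 = m+1 by omega]
        push_cast
        field_simp
        ring
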